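/- arXiv:2410.11461 — 3 statements merged into one kernel-verified Lean document; each statement's English description precedes it below -/
import Mathlib

section
/- Let M be a smooth (C^∞) manifold, possibly with boundary, let M' be a smooth manifold without boundary, let E ⊆ M be a closed subset, and let f : M → M' be a continuous map that is smooth on some open neighborhood of E. Then for every open set U ⊆ M × M' containing the graph {(x, f(x)) : x ∈ M} of f, there exists a smooth map g : M → M' such that g = f on E and the graph of g is contained in U. -/
open scoped Manifold

open Set Metric

theorem aux_vector_approx
    {EM : Type*} [NormedAddCommGroup EM] [NormedSpace ℝ EM] [FiniteDimensional ℝ EM]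
    {HM : Type*} [TopologicalSpace HM] (I : ModelWithCorners ℝ EM HM)
    {M : Type*} [TopologicalSpace M] [ChartedSpace HM M] [IsManifold I (⊤ : ℕ∞) M]
    [T2Space M] [SigmaCompactSpace M]
    {F : Type*} [NormedAddCommGroup F] [NormedSpace ℝ F]
    (u : M → F) (O : Set M) (hO : IsOpen O) (hu : ContinuousOn u O)
    (Ω : Set M) (hΩ : IsOpen Ω) (hΩO : Ω ⊆ O) (husm : ContMDiffOn I 𝓘(ℝ, F) (⊤ : ℕ∞) u Ω)
    (C : Set M) (hC : IsClosed C) (hCΩ : C ⊆ Ω)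
    (L : Set M) (hL : IsClosed L) (hLO : L ⊆ O) (hCL : C ⊆ L)
    (δ : ℝ) (hδ : 0 < δ) :
    ∃ v : M → F, ContMDiff I 𝓘(ℝ, F) (⊤ : ℕ∞) v ∧ (∀ y ∈ L, dist (v y) (u y) ≤ δ) ∧
      ∀ y ∈ C, v y = u y := by
  classical
  set t : M → Set F := fun y =>
    if y ∈ C then {u y} else if y ∈ L then closedBall (u y) δ else univ with ht_def
  have htconv : ∀ y, Convex ℝ (t y) := by
    intro y
    simp only [ht_def]
    split_ifs
    · exact convex_singleton _
    · exact convex_closedBall _ _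
    · exact convex_univ
  have hmem : ∀ y, u y ∈ t y := by
    intro y
    simp only [ht_def]
    split_ifs
    · exact rfl
    · exact mem_closedBall_self hδ.le
    · trivial
  have Hloc : ∀ x : M, ∃ N ∈ nhds x, ∃ g : M → F,
      ContMDiffOn I 𝓘(ℝ, F) (⊤ : ℕ∞) g N ∧ ∀ y ∈ N, g y ∈ t y := by
    intro x
    by_cases hxΩ : x ∈ Ω
    · exact ⟨Ω, hΩ.mem_nhds hxΩ, u, husm, fun y _ => hmem y⟩
    · have hxC : x ∉ C := fun h => hxΩ (hCΩ h)
      by_cases hxO : x ∈ O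
      · refine ⟨Cᶜ ∩ (O ∩ u ⁻¹' ball (u x) δ), ?_, fun _ => u x, contMDiffOn_const, ?_⟩
        · refine Filter.inter_mem (hC.isOpen_compl.mem_nhds hxC) ?_
          exact (hu.isOpen_inter_preimage hO isOpen_ball).mem_nhds
            ⟨hxO, mem_ball_self hδ⟩
        · rintro y ⟨hyC, -, hyb⟩
          simp only [ht_def, if_neg hyC]
          split_ifs
          · exact mem_closedBall.2 (le_of_lt (by simpa [dist_comm] using hyb))
          · trivial
      · have hxL : x ∉ L := fun h => hxO (hLO h)
        refine ⟨Lᶜ, hL.isOpen_compl.mem_nhds hxL, fun _ => u x, contMDiffOn_const, ?_⟩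
        intro y hy
        have hyC : y ∉ C := fun h => hy (hCL h)
        simp only [ht_def, if_neg hyC, if_neg hy]
        trivial
  obtain ⟨v, hv⟩ := exists_contMDiffMap_forall_mem_convex_of_local I htconv Hloc
  refine ⟨v, v.contMDiff, ?_, ?_⟩
  · intro y hy
    have := hv y
    simp only [ht_def] at this
    split_ifs at this with h1
    · rw [mem_singleton_iff.mp this]
      simpa using hδ.le
    · exact this
  · intro y hy
    have := hv y
    simp only [ht_def, if_pos hy] at this
    exact this

/-- Let `M` be a smooth manifold possibly with boundary, `M'` a smooth manifold without
boundary, `A ⊆ M` a closed subset, and `f : M → M'` a continuous map which is smooth on an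
open neighborhood of `A`. Then for every open set `U ⊆ M × M'` containing the graph of `f`
there is a smooth map `g : M → M'` with `g = f` on `A` whose graph is contained in `U`. -/
theorem stmt3
    {EM : Type*} [NormedAddCommGroup EM] [NormedSpace ℝ EM] [FiniteDimensional ℝ EM]
    {HM : Type*} [TopologicalSpace HM] (I : ModelWithCorners ℝ EM HM)
    {M : Type*} [TopologicalSpace M] [ChartedSpace HM M] [IsManifold I (⊤ : ℕ∞) M]
    [T2Space M] [SecondCountableTopology M]
    {EN : Type*} [NormedAddCommGroup EN] [NormedSpace ℝ EN] [FiniteDimensional ℝ EN]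
    {HN : Type*} [TopologicalSpace HN] (I' : ModelWithCorners ℝ EN HN) [I'.Boundaryless]
    {M' : Type*} [TopologicalSpace M'] [ChartedSpace HN M'] [IsManifold I' (⊤ : ℕ∞) M']
    [T2Space M'] [SecondCountableTopology M']
    (f : M → M') (hf : Continuous f)
    (A : Set M) (hA : IsClosed A)
    (hsm : ∃ V : Set M, IsOpen V ∧ A ⊆ V ∧ ContMDiffOn I I' (⊤ : ℕ∞) f V)
    (U : Set (M × M')) (hU : IsOpen U) (hgraph : ∀ x : M, (x, f x) ∈ U) :
    ∃ g : M → M', ContMDiff I I' (⊤ : ℕ∞) g ∧ (∀ x ∈ A, g x = f x) ∧ ∀ x : M, (x, g x) ∈ U := by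
  classical
  rcases isEmpty_or_nonempty M with hM | hM
  · exact ⟨f, fun x => isEmptyElim x, fun x hx => isEmptyElim x, fun x => isEmptyElim x⟩
  obtain ⟨V, hVo, hAV, hfV⟩ := hsm
  haveI : LocallyCompactSpace HM := I.locallyCompactSpace
  haveI : LocallyCompactSpace M := ChartedSpace.locallyCompactSpace HM M
  haveI : LocallyCompactSpace HN := I'.locallyCompactSpace
  haveI : LocallyCompactSpace M' := ChartedSpace.locallyCompactSpace HN M'
  haveI : SigmaCompactSpace M := by infer_instance
  haveI : ParacompactSpace M := by infer_instance
  haveI : NormalSpace M := by infer_instance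
  haveI : TopologicalSpace.MetrizableSpace M' := Manifold.metrizableSpace I' M'
  letI : MetricSpace M' := TopologicalSpace.metrizableSpaceMetric M'
  haveI : ProperSpace EN := by infer_instance
  -- The closed set D with A ⊆ interior-ish D ⊆ V
  obtain ⟨D₀, hD₀o, hAD₀, hD₀V⟩ := normal_exists_closure_subset hA hVo hAV
  set D := closure D₀ with hD_def
  have hDc : IsClosed D := isClosed_closure
  have hAD : A ⊆ D := hAD₀.trans subset_closure
  have hDV : D ⊆ V := hD₀V
  -- choose per-point chart radii on the target
  have hchart : ∀ x : M, ∃ r : ℝ, 0 < r ∧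
      closedBall (extChartAt I' (f x) (f x)) (2*r) ⊆ (extChartAt I' (f x)).target := by
    intro x
    have h1 : extChartAt I' (f x) (f x) ∈ (extChartAt I' (f x)).target :=
      (extChartAt I' (f x)).map_source (mem_extChartAt_source (f x))
    obtain ⟨ε, hε, hb⟩ := Metric.isOpen_iff.mp (isOpen_extChartAt_target (f x)) _ h1
    exact ⟨ε/3, by positivity, (closedBall_subset_ball (by linarith)).trans hb⟩
  choose r₀ hr₀ hball₀ using hchart
  set G₀ : M → Set M' := fun x => (extChartAt I' (f x)).source ∩
      extChartAt I' (f x) ⁻¹' (ball (extChartAt I' (f x) (f x)) (r₀ x)) with hG₀_def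
  have hG₀open : ∀ x, IsOpen (G₀ x) := fun x =>
    (continuousOn_extChartAt (f x)).isOpen_inter_preimage (isOpen_extChartAt_source _)
      isOpen_ball
  have hfxG : ∀ x, f x ∈ G₀ x := fun x =>
    ⟨mem_extChartAt_source _, mem_preimage.mpr (mem_ball_self (hr₀ x))⟩
  -- precompact neighborhoods mapping into the chart regions
  have hW1 : ∀ x : M, ∃ w : Set M, IsOpen w ∧ x ∈ w ∧ IsCompact (closure w) ∧
      closure w ⊆ f ⁻¹' (G₀ x) := by
    intro x
    obtain ⟨s, hs_nhds, hs_sub, hs_cpt⟩ := LocallyCompactSpace.local_compact_nhds x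
      (f ⁻¹' (G₀ x)) (((hG₀open x).preimage hf).mem_nhds (hfxG x))
    refine ⟨interior s, isOpen_interior, mem_interior_iff_mem_nhds.mpr hs_nhds, ?_, ?_⟩
    · exact hs_cpt.of_isClosed_subset isClosed_closure
        ((closure_minimal interior_subset hs_cpt.isClosed))
    · exact (closure_minimal interior_subset hs_cpt.isClosed).trans hs_sub
  choose w₁ hw₁o hw₁mem hw₁cpt hw₁sub using hW1
  -- locally finite refinement
  obtain ⟨v, hvo, hvU, hvlf, hvsub⟩ := precise_refinement w₁ hw₁o
    (eq_univ_iff_forall.mpr fun x => mem_iUnion.mpr ⟨x, hw₁mem x⟩)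
  obtain ⟨S, hScount, hSU⟩ := TopologicalSpace.isOpen_iUnion_countable v hvo
  obtain ⟨enc, henc⟩ := Set.countable_iff_exists_injective.mp hScount
  set Wo : ℕ → Set M := fun n => ⋃ (s : S) (_ : enc s = n), v s with hWo_def
  have hWoopen : ∀ n, IsOpen (Wo n) := fun n => isOpen_iUnion fun s => isOpen_iUnion fun _ => hvo s
  have hWocover : (⋃ n, Wo n) = univ := by
    apply eq_univ_iff_forall.mpr
    intro x
    have : x ∈ ⋃ i ∈ S, v i := by rw [hSU, hvU]; trivial
    obtain ⟨i, hiS, hiv⟩ := mem_iUnion₂.mp this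
    exact mem_iUnion.mpr ⟨enc ⟨i, hiS⟩, mem_iUnion.mpr ⟨⟨i, hiS⟩, mem_iUnion.mpr ⟨rfl, hiv⟩⟩⟩
  have hWolf : LocallyFinite Wo := by
    intro x
    obtain ⟨P, hP, hPfin⟩ := hvlf x
    refine ⟨P, hP, ?_⟩
    have : {n | (Wo n ∩ P).Nonempty} ⊆ (fun s : S => enc s) '' {s : S | (v s ∩ P).Nonempty} := by
      rintro n ⟨y, hy, hyP⟩
      obtain ⟨s, hs⟩ := mem_iUnion.mp hy
      obtain ⟨hsn, hys⟩ := mem_iUnion.mp hs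
      exact ⟨s, ⟨y, hys, hyP⟩, hsn⟩
    exact ((hPfin.preimage (Subtype.val_injective.injOn)).image _).subset this
  have hWosub : ∀ n : ℕ, ∃ x : M, Wo n ⊆ v x ∧ Wo n ⊆ w₁ x := by
    intro n
    by_cases hn : ∃ s : S, enc s = n
    · obtain ⟨s, hs⟩ := hn
      refine ⟨s, ?_, ?_⟩
      · intro y hy
        obtain ⟨s', hs'⟩ := mem_iUnion.mp hy
        obtain ⟨hs'n, hys'⟩ := mem_iUnion.mp hs'
        have : s' = s := henc (hs'n.trans hs.symm)
        rwa [this] at hys'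
      · intro y hy
        obtain ⟨s', hs'⟩ := mem_iUnion.mp hy
        obtain ⟨hs'n, hys'⟩ := mem_iUnion.mp hs'
        have : s' = s := henc (hs'n.trans hs.symm)
        rw [this] at hys'
        exact hvsub _ hys'
    · refine ⟨hM.some, ?_, ?_⟩ <;>
      · intro y hy
        obtain ⟨s', hs'⟩ := mem_iUnion.mp hy
        obtain ⟨hs'n, _⟩ := mem_iUnion.mp hs'
        exact absurd ⟨s', hs'n⟩ hn
  have hWodata : ∀ n : ℕ, ∃ x : M, closure (Wo n) ⊆ f ⁻¹' (G₀ x) ∧ IsCompact (closure (Wo n)) := by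
    intro n
    obtain ⟨x, _, hx2⟩ := hWosub n
    have h1 : closure (Wo n) ⊆ closure (w₁ x) := closure_mono hx2
    exact ⟨x, h1.trans (hw₁sub x), (hw₁cpt x).of_isClosed_subset isClosed_closure h1⟩
  choose xn hxnG hxncpt using hWodata
  -- the margin constants s_n
  have hsnex : ∀ n, ∃ s : ℝ, 0 < s ∧ ∀ y ∈ closure (Wo n), closedBall (f y) s ⊆ G₀ (xn n) := by
    intro n
    have hPc : IsCompact (f '' closure (Wo n)) := (hxncpt n).image_of_continuousOn hf.continuousOn
    have hPG : f '' closure (Wo n) ⊆ G₀ (xn n) := image_subset_iff.mpr (hxnG n)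
    obtain ⟨δ, hδ, hth⟩ := hPc.exists_thickening_subset_open (hG₀open _) hPG
    refine ⟨δ/2, by positivity, fun y hy z hz => hth ?_⟩
    rw [mem_thickening_iff]
    exact ⟨f y, mem_image_of_mem f hy, lt_of_le_of_lt hz (by linarith)⟩
  choose sn hsnpos hsnball using hsnex
  -- the control function η
  set t : M → Set ℝ := fun x => {s | 0 < s ∧ (∀ z : M', dist z (f x) ≤ s → (x, z) ∈ U) ∧
      ∀ n, x ∈ closure (Wo n) → s ≤ sn n} with ht_def
  have htconv : ∀ x, Convex ℝ (t x) := by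
    intro x
    rw [convex_iff_ordConnected]
    constructor
    rintro a ⟨ha0, haU, han⟩ b ⟨hb0, hbU, hbn⟩ z hz
    refine ⟨lt_of_lt_of_le ha0 hz.1, fun w hw => hbU w (hw.trans hz.2), fun n hn =>
      hz.2.trans (hbn n hn)⟩
  have htloc : ∀ x : M, ∃ c : ℝ, ∀ᶠ y in nhds x, c ∈ t y := by
    intro x
    obtain ⟨P, hP, hPfin⟩ := (hWolf.closure) x
    -- a positive constant below the margins of all nearby pieces
    have hc1 : ∃ c₁ : ℝ, 0 < c₁ ∧ ∀ n ∈ hPfin.toFinset, c₁ ≤ sn n := by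
      rcases hPfin.toFinset.eq_empty_or_nonempty with he | hne
      · exact ⟨1, one_pos, by simp [he]⟩
      · exact ⟨hPfin.toFinset.inf' hne sn, (Finset.lt_inf'_iff _).mpr fun n _ => hsnpos n,
          fun n hn => Finset.inf'_le _ hn⟩
    obtain ⟨c₁, hc₁pos, hc₁⟩ := hc1
    -- a margin for the open set U around (x, f x)
    obtain ⟨N, B, hNo, hBo, hxN, hfxB, hNB⟩ := isOpen_prod_iff.mp hU x (f x) (hgraph x)
    obtain ⟨ε₂, hε₂pos, hε₂⟩ := Metric.isOpen_iff.mp hBo _ hfxB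
    refine ⟨min c₁ (ε₂/3), ?_⟩
    have hev : N ∩ P ∩ f ⁻¹' (ball (f x) (ε₂/3)) ∈ nhds x := by
      refine Filter.inter_mem (Filter.inter_mem (hNo.mem_nhds hxN) hP) ?_
      exact hf.continuousAt.preimage_mem_nhds (ball_mem_nhds _ (by positivity))
    filter_upwards [hev] with y hy
    obtain ⟨⟨hyN, hyP⟩, hyb⟩ := hy
    refine ⟨lt_min hc₁pos (by positivity), ?_, ?_⟩
    · intro z hz
      apply hNB
      refine ⟨hyN, hε₂ ?_⟩
      have h1 : dist z (f y) ≤ ε₂/3 := hz.trans (min_le_right _ _)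
      have h2 : dist (f y) (f x) < ε₂/3 := hyb
      calc dist z (f x) ≤ dist z (f y) + dist (f y) (f x) := dist_triangle _ _ _
        _ < ε₂ := by linarith
    · intro n hn
      refine (min_le_left _ _).trans (hc₁ n ?_)
      rw [Set.Finite.mem_toFinset]
      exact ⟨y, hn, hyP⟩
  obtain ⟨η, hηmem⟩ := exists_contMDiffMap_forall_mem_convex_of_local_const I (n := (⊤ : ℕ∞)) htconv htloc
  have hηpos : ∀ x, 0 < η x := fun x => (hηmem x).1
  have hηU : ∀ x, ∀ z : M', dist z (f x) ≤ η x → (x, z) ∈ U := fun x => (hηmem x).2.1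
  have hηG : ∀ n, ∀ y ∈ closure (Wo n), closedBall (f y) (η y) ⊆ G₀ (xn n) := fun n y hy =>
    (closedBall_subset_closedBall ((hηmem y).2.2 n hy)).trans (hsnball n y hy)
  have hηc : Continuous (η : M → ℝ) := η.contMDiff.continuous
  -- shrink the cover
  obtain ⟨v', hv'U, hv'o, hv'cl⟩ := exists_subset_iUnion_closure_subset isClosed_univ hWoopen
    (fun x _ => hWolf.point_finite x) (by rw [hWocover])
  set Kc : ℕ → Set M := fun n => closure (v' n) with hKc_def
  have hKcc : ∀ n, IsClosed (Kc n) := fun n => isClosed_closure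
  have hKcWo : ∀ n, Kc n ⊆ Wo n := hv'cl
  have hKccover : ∀ x : M, ∃ n, x ∈ Kc n := by
    intro x
    obtain ⟨n, hn⟩ := mem_iUnion.mp (hv'U (mem_univ x))
    exact ⟨n, subset_closure hn⟩
  -- the inductive predicate
  set Pred : ℕ → (M → M') → Prop := fun n g =>
    Continuous g ∧ EqOn g f D ∧ (∀ x, dist (g x) (f x) ≤ (1 - (2:ℝ)⁻¹^n) * η x) ∧
      ∃ Ω : Set M, IsOpen Ω ∧ (D ∪ ⋃ i ∈ Finset.range n, Kc i) ⊆ Ω ∧ ContMDiffOn I I' (⊤ : ℕ∞) g Ω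
    with hPred_def
  have base : Pred 0 f := by
    refine ⟨hf, fun y _ => rfl, fun x => by simp, V, hVo, ?_, hfV⟩
    simp only [Finset.range_zero, Finset.notMem_empty, iUnion_of_empty, iUnion_empty,
      union_empty]
    exact hDV
  have pow_halves : ∀ n : ℕ, (0:ℝ) < (2:ℝ)⁻¹^n ∧ (2:ℝ)⁻¹^n ≤ 1 := by
    intro n
    constructor
    · positivity
    · exact pow_le_one₀ (by norm_num) (by norm_num)
  have step : ∀ n (g : M → M'), Pred n g →
      ∃ h : M → M', Pred (n+1) h ∧ ∀ y, y ∉ Wo n → h y = g y := by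
    intro n g hPg
    obtain ⟨hgc, hgD, hgdist, Ω, hΩo, hΩsub, hΩsm⟩ := hPg
    have hDΩ : D ⊆ Ω := fun y hy => hΩsub (Or.inl hy)
    have hpow1 : ((2:ℝ)⁻¹)^(n+1) ≤ ((2:ℝ)⁻¹)^n :=
      pow_le_pow_of_le_one (by norm_num) (by norm_num) (Nat.le_succ n)
    have hdist_mono : ∀ x : M, (1 - (2:ℝ)⁻¹^n) * η x ≤ (1 - (2:ℝ)⁻¹^(n+1)) * η x := by
      intro x
      nlinarith [hηpos x]
    have hΩext : ∀ Ω' : Set M, (D ∪ ⋃ i ∈ Finset.range n, Kc i) ⊆ Ω' → Kc n ⊆ Ω' →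
        (D ∪ ⋃ i ∈ Finset.range (n+1), Kc i) ⊆ Ω' := by
      intro Ω' hsub hKn
      rintro y (hy | hy)
      · exact hsub (Or.inl hy)
      · obtain ⟨i, hi, hyi⟩ := mem_iUnion₂.mp hy
        rcases Nat.lt_succ_iff_lt_or_eq.mp (Finset.mem_range.mp hi) with hlt | heq
        · exact hsub (Or.inr (mem_iUnion₂.mpr ⟨i, Finset.mem_range.mpr hlt, hyi⟩))
        · subst heq; exact hKn hyi
    rcases eq_empty_or_nonempty (closure (Wo n)) with hLe | hLne
    · have hKn : Kc n ⊆ Ω := by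
        intro y hy
        exact absurd (subset_closure (hKcWo n hy)) (by simp [hLe])
      exact ⟨g, ⟨hgc, hgD, fun x => (hgdist x).trans (hdist_mono x), Ω, hΩo,
        hΩext Ω hΩsub hKn, hΩsm⟩, fun y _ => rfl⟩
    · set L := closure (Wo n) with hL_def
      set e := extChartAt I' (f (xn n)) with he_def
      set c : EN := e (f (xn n)) with hc_def
      set r : ℝ := r₀ (xn n) with hr_def
      have hrpos : 0 < r := hr₀ _
      have hT : closedBall c (2*r) ⊆ e.target := hball₀ _
      have hfactor : (1 - (2:ℝ)⁻¹^n) ≤ 1 := by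
        have := (pow_halves n).1; linarith
      have hgL : ∀ y ∈ L, g y ∈ G₀ (xn n) := by
        intro y hy
        apply hηG n y hy
        exact mem_closedBall.mpr ((hgdist y).trans
          (mul_le_of_le_one_left (hηpos y).le hfactor))
      set O : Set M := g ⁻¹' (G₀ (xn n)) with hO_def
      have hOopen : IsOpen O := (hG₀open _).preimage hgc
      have hLO : L ⊆ O := hgL
      have hWoL : Wo n ⊆ L := subset_closure
      have hmemO : ∀ y ∈ O, g y ∈ e.source ∧ e (g y) ∈ ball c r := fun y hy => hy
      set u : M → EN := fun y => e (g y) with hu_def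
      have hucont : ContinuousOn u O := by
        apply (continuousOn_extChartAt (f (xn n))).comp hgc.continuousOn
        exact fun y hy => (hmemO y hy).1
      set Ωu : Set M := Ω ∩ O with hΩu_def
      have hΩuo : IsOpen Ωu := hΩo.inter hOopen
      have husm : ContMDiffOn I 𝓘(ℝ, EN) (⊤ : ℕ∞) u Ωu := by
        apply ContMDiffOn.comp (t := (chartAt HN (f (xn n))).source)
          (contMDiffOn_extChartAt (n := (⊤ : ℕ∞))) (hΩsm.mono inter_subset_left)
        intro y hy
        rw [← extChartAt_source I']
        exact (hmemO y hy.2).1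
      set Cs : Set M := D ∩ L with hCs_def
      have hCsc : IsClosed Cs := hDc.inter isClosed_closure
      have hCsΩu : Cs ⊆ Ωu := fun y hy => ⟨hDΩ hy.1, hLO hy.2⟩
      -- minimum of the allowed move over L
      have hLcpt : IsCompact L := hxncpt n
      obtain ⟨y₀, hy₀L, hy₀min⟩ := hLcpt.exists_isMinOn hLne hηc.continuousOn
      set ρ : ℝ := (2:ℝ)⁻¹^(n+1) * η y₀ with hρ_def
      have hρpos : 0 < ρ := by
        have := hηpos y₀
        have := (pow_halves (n+1)).1
        positivity
      -- uniform continuity of the inverse chart on the big closed ball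
      have hcb : IsCompact (closedBall c (2*r)) := isCompact_closedBall _ _
      have hsymmc : ContinuousOn e.symm (closedBall c (2*r)) :=
        (continuousOn_extChartAt_symm (f (xn n))).mono hT
      have huc := hcb.uniformContinuousOn_of_continuous hsymmc
      rw [Metric.uniformContinuousOn_iff] at huc
      obtain ⟨δ₀, hδ₀pos, hδ₀⟩ := huc ρ hρpos
      set δ : ℝ := min (δ₀/2) r with hδ_def
      have hδpos : 0 < δ := lt_min (by linarith) hrpos
      have hδr : δ ≤ r := min_le_right _ _
      have hδδ₀ : δ < δ₀ := lt_of_le_of_lt (min_le_left _ _) (by linarith)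
      -- the smooth approximation of u
      obtain ⟨v₂, hv₂sm, hv₂d, hv₂C⟩ := aux_vector_approx I u O hOopen hucont Ωu hΩuo
        inter_subset_right husm Cs hCsc hCsΩu L isClosed_closure hLO inter_subset_right δ hδpos
      -- cutoff function
      obtain ⟨W', hW'o, hKW', hW'W⟩ := normal_exists_closure_subset (hKcc n) (hWoopen n)
        (hKcWo n)
      obtain ⟨Q, hQo, hKQ, hQW'⟩ := normal_exists_closure_subset (hKcc n) hW'o hKW'
      have hdisj : Disjoint (W'ᶜ) (closure Q) := by
        rw [Set.disjoint_left]
        intro a ha ha2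
        exact ha (hQW' ha2)
      obtain ⟨χ, hχ0, hχ1, hχ01⟩ := exists_contMDiffMap_zero_one_of_isClosed I (n := (⊤ : ℕ∞))
        (isClosed_compl_iff.mpr hW'o) isClosed_closure hdisj
      have hχ0' : ∀ y, y ∉ W' → χ y = 0 := fun y hy => hχ0 hy
      have hW'Wo : W' ⊆ Wo n := subset_closure.trans hW'W
      have hW'L : W' ⊆ L := hW'Wo.trans hWoL
      have hχsupp : ∀ y, χ y ≠ 0 → y ∈ W' := by
        intro y hy
        by_contra hc
        exact hy (hχ0' y hc)
      -- the blended map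
      set wfun : M → EN := fun y => u y + χ y • (v₂ y - u y) with hwfun_def
      set gnew : M → M' := fun y => if y ∈ O then e.symm (wfun y) else g y with hgnew_def
      have hw_of_zero : ∀ y, χ y = 0 → wfun y = u y := by
        intro y hy
        simp [hwfun_def, hy]
      have hdwu : ∀ y ∈ L, dist (wfun y) (u y) ≤ δ := by
        intro y hy
        have h1 : wfun y - u y = χ y • (v₂ y - u y) := by
          simp [hwfun_def]
        rw [dist_eq_norm, h1, norm_smul]
        have h2 := hχ01 y
        have h3 : dist (v₂ y) (u y) ≤ δ := hv₂d y hy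
        rw [dist_eq_norm] at h3
        calc ‖χ y‖ * ‖v₂ y - u y‖ ≤ 1 * δ := by
              apply mul_le_mul _ h3 (norm_nonneg _) one_pos.le
              rw [Real.norm_eq_abs, abs_le]
              exact ⟨by linarith [h2.1], h2.2⟩
          _ = δ := one_mul δ
      have hw_ball : ∀ y ∈ O, wfun y ∈ ball c (2*r) := by
        intro y hy
        by_cases hχy : χ y = 0
        · rw [hw_of_zero y hχy]
          exact ball_subset_ball (by linarith) (hmemO y hy).2
        · have hyL : y ∈ L := hW'L (hχsupp y hχy)
          have h1 : dist (wfun y) (u y) ≤ δ := hdwu y hyL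
          have h2 : dist (u y) c < r := (hmemO y hy).2
          rw [mem_ball]
          calc dist (wfun y) c ≤ dist (wfun y) (u y) + dist (u y) c := dist_triangle _ _ _
            _ < 2*r := by linarith
      have hw_cb : ∀ y ∈ O, wfun y ∈ closedBall c (2*r) := fun y hy =>
        ball_subset_closedBall (hw_ball y hy)
      have hu_cb : ∀ y ∈ O, u y ∈ closedBall c (2*r) := fun y hy =>
        ball_subset_closedBall (ball_subset_ball (by linarith) (hmemO y hy).2)
      have hw_target : ∀ y ∈ O, wfun y ∈ e.target := fun y hy => hT (hw_cb y hy)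
      have hEsymm_u : ∀ y ∈ O, e.symm (u y) = g y := fun y hy => e.left_inv (hmemO y hy).1
      have hgnew_zero : ∀ y, χ y = 0 → gnew y = g y := by
        intro y hy
        by_cases hyO : y ∈ O
        · simp only [hgnew_def, if_pos hyO, hw_of_zero y hy, hEsymm_u y hyO]
        · simp only [hgnew_def, if_neg hyO]
      have hgnew_out : ∀ y, y ∉ Wo n → gnew y = g y :=
        fun y hy => hgnew_zero y (hχ0' y fun h => hy (hW'Wo h))
      have hgnew_D : ∀ y ∈ D, gnew y = g y := by
        intro y hyD
        by_cases hyO : y ∈ O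
        · by_cases hyL : y ∈ L
          · have hveq : v₂ y = u y := hv₂C y ⟨hyD, hyL⟩
            simp only [hgnew_def, if_pos hyO, hwfun_def, hveq, sub_self, smul_zero, add_zero]
            exact hEsymm_u y hyO
          · exact hgnew_zero y (hχ0' y fun h => hyL (hW'L h))
        · simp only [hgnew_def, if_neg hyO]
      have hgnew_dist : ∀ y, dist (gnew y) (g y) ≤ (2:ℝ)⁻¹^(n+1) * η y := by
        intro y
        by_cases hχy : χ y = 0
        · rw [hgnew_zero y hχy, dist_self]
          have := hηpos y
          have := (pow_halves (n+1)).1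
          positivity
        · have hyW' : y ∈ W' := hχsupp y hχy
          have hyL : y ∈ L := hW'L hyW'
          have hyO : y ∈ O := hLO hyL
          have h1 : dist (wfun y) (u y) ≤ δ := hdwu y hyL
          have h2 := hδ₀ _ (hw_cb y hyO) _ (hu_cb y hyO) (lt_of_le_of_lt h1 hδδ₀)
          have h3 : gnew y = e.symm (wfun y) := by simp only [hgnew_def, if_pos hyO]
          have h4 : e.symm (u y) = g y := hEsymm_u y hyO
          rw [h3, ← h4]
          refine h2.le.trans ?_
          rw [hρ_def]
          have h5 : η y₀ ≤ η y := (isMinOn_iff.mp hy₀min) y hyL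
          have := (pow_halves (n+1)).1
          nlinarith
      -- continuity
      have hgnewc : Continuous gnew := by
        rw [continuous_iff_continuousAt]
        intro y
        by_cases hyO : y ∈ O
        · have hu_at : ContinuousAt u y := hucont.continuousAt (hOopen.mem_nhds hyO)
          have hw_at : ContinuousAt wfun y :=
            hu_at.add ((χ.contMDiff.continuous.continuousAt).smul
              ((hv₂sm.continuous.continuousAt).sub hu_at))
          have hsymm_at : ContinuousAt e.symm (wfun y) :=
            (continuousOn_extChartAt_symm (f (xn n))).continuousAt
              ((isOpen_extChartAt_target _).mem_nhds (hw_target y hyO))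
          have hcomp : ContinuousAt (fun z => e.symm (wfun z)) y := hsymm_at.comp hw_at
          apply hcomp.congr
          filter_upwards [hOopen.mem_nhds hyO] with z hz
          simp only [hgnew_def, if_pos hz]
        · have hyW' : y ∉ closure W' := fun h => hyO (hLO (hWoL (hW'W h)))
          apply hgc.continuousAt.congr
          filter_upwards [(isClosed_closure (s := W')).isOpen_compl.mem_nhds hyW'] with z hz
          exact (hgnew_zero z (hχ0' z fun hzc => hz (subset_closure hzc))).symm
      -- smoothness on the enlarged open set
      set Ω' : Set M := Ω ∪ (O ∩ Q) with hΩ'_def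
      have hΩ'o : IsOpen Ω' := hΩo.union (hOopen.inter hQo)
      have hsm' : ContMDiffOn I I' (⊤ : ℕ∞) gnew Ω' := by
        intro z hz
        apply ContMDiffAt.contMDiffWithinAt
        by_cases hzs : z ∈ closure W'
        · have hzL : z ∈ L := hWoL (hW'W hzs)
          have hzO : z ∈ O := hLO hzL
          have hwz : ContMDiffAt I 𝓘(ℝ, EN) (⊤ : ℕ∞) wfun z := by
            by_cases hzΩ : z ∈ Ω
            · have hu_at : ContMDiffAt I 𝓘(ℝ, EN) (⊤ : ℕ∞) u z :=
                (husm z ⟨hzΩ, hzO⟩).contMDiffAt (hΩuo.mem_nhds ⟨hzΩ, hzO⟩)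
              exact hu_at.add ((χ.contMDiff z).smul ((hv₂sm z).sub hu_at))
            · have hzQ : z ∈ Q := (hz.resolve_left hzΩ).2
              have : wfun =ᶠ[nhds z] v₂ := by
                filter_upwards [hQo.mem_nhds hzQ] with z' hz'
                have hχ1' : χ z' = 1 := hχ1 (subset_closure hz')
                simp [hwfun_def, hχ1']
              exact (hv₂sm z).congr_of_eventuallyEq this
          have hsymm_at : ContMDiffAt 𝓘(ℝ, EN) I' (⊤ : ℕ∞) e.symm (wfun z) :=
            (contMDiffOn_extChartAt_symm (f (xn n))).contMDiffAt
              ((isOpen_extChartAt_target _).mem_nhds (hw_target z hzO))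
          have hcomp : ContMDiffAt I I' (⊤ : ℕ∞) (fun z' => e.symm (wfun z')) z :=
            hsymm_at.comp z hwz
          apply hcomp.congr_of_eventuallyEq
          filter_upwards [hOopen.mem_nhds hzO] with z' hz'
          simp only [hgnew_def, if_pos hz']
        · have hzΩ : z ∈ Ω := hz.resolve_right fun hq => hzs (subset_closure (hQW' (subset_closure hq.2)))
          have hg_at : ContMDiffAt I I' (⊤ : ℕ∞) g z := (hΩsm z hzΩ).contMDiffAt (hΩo.mem_nhds hzΩ)
          apply hg_at.congr_of_eventuallyEq
          filter_upwards [(isClosed_closure (s := W')).isOpen_compl.mem_nhds hzs] with z' hz'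
          exact hgnew_zero z' (hχ0' z' fun hzc => hz' (subset_closure hzc))
      -- assembling the new predicate
      refine ⟨gnew, ⟨hgnewc, ?_, ?_, Ω', hΩ'o, ?_, hsm'⟩, hgnew_out⟩
      · exact fun y hy => (hgnew_D y hy).trans (hgD hy)
      · intro x
        calc dist (gnew x) (f x) ≤ dist (gnew x) (g x) + dist (g x) (f x) := dist_triangle _ _ _
          _ ≤ (2:ℝ)⁻¹^(n+1) * η x + (1 - (2:ℝ)⁻¹^n) * η x := add_le_add (hgnew_dist x) (hgdist x)
          _ = (1 - (2:ℝ)⁻¹^(n+1)) * η x := by rw [pow_succ]; ring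
      · apply hΩext
        · exact fun y hy => Or.inl (hΩsub hy)
        · intro y hy
          exact Or.inr ⟨hLO (hWoL (hKcWo n hy)), hKQ hy⟩

  choose stepg stepP stepE using step
  let seq : ∀ n : ℕ, {g : M → M' // Pred n g} :=
    fun n => Nat.rec ⟨f, base⟩ (fun k p => ⟨stepg k p.1 p.2, stepP k p.1 p.2⟩) n
  have hsame : ∀ n y, y ∉ Wo n → (seq (n+1)).1 y = (seq n).1 y :=
    fun n y hy => stepE n (seq n).1 (seq n).2 y hy
  have stab : ∀ m k y, m ≤ k → (∀ i, m ≤ i → i < k → y ∉ Wo i) →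
      (seq k).1 y = (seq m).1 y := by
    intro m k y hmk h
    induction k, hmk using Nat.le_induction with
    | base => rfl
    | succ k hmk ih =>
        rw [hsame k y (h k hmk (Nat.lt_succ_self k))]
        exact ih fun i h1 h2 => h i h1 (h2.trans (Nat.lt_succ_self k))
  have hptfin : ∀ y, {n | y ∈ Wo n}.Finite := fun y => hWolf.point_finite y
  set Nx : M → ℕ := fun y => ((hptfin y).toFinset.sup id) + 1 with hNx_def
  have hNx : ∀ y i, Nx y ≤ i → y ∉ Wo i := by
    intro y i hi hyW
    have h1 : i ∈ (hptfin y).toFinset := by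
      rw [Set.Finite.mem_toFinset]; exact hyW
    have h2 := Finset.le_sup (f := id) h1
    simp only [id] at h2
    have hi' : (hptfin y).toFinset.sup id + 1 ≤ i := hi
    omega
  set g : M → M' := fun y => (seq (Nx y)).1 y with hg_def
  have hg_stab : ∀ y k, Nx y ≤ k → (seq k).1 y = g y :=
    fun y k hk => stab (Nx y) k y hk fun i h1 _ => hNx y i h1
  have hloc : ∀ x : M, ∃ P ∈ nhds x, ∃ N₀ : ℕ, ∀ k, N₀ ≤ k → ∀ y ∈ P, g y = (seq k).1 y := by
    intro x
    obtain ⟨P, hP, hPfin⟩ := hWolf x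
    refine ⟨P, hP, hPfin.toFinset.sup id + 1, fun k hk y hy => ?_⟩
    have hnoW : ∀ i, k ≤ i → y ∉ Wo i := by
      intro i hik hyW
      have h1 : i ∈ hPfin.toFinset := by
        rw [Set.Finite.mem_toFinset]; exact ⟨y, hyW, hy⟩
      have h2 := Finset.le_sup (f := id) h1
      simp only [id] at h2
      omega
    have h1 : (seq (max k (Nx y))).1 y = (seq k).1 y :=
      stab k _ y (le_max_left _ _) fun i hi _ => hnoW i hi
    have h2 : (seq (max k (Nx y))).1 y = g y := hg_stab y _ (le_max_right _ _)
    rw [← h2, h1]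
  refine ⟨g, ?_, ?_, ?_⟩
  · intro x
    obtain ⟨m, hm⟩ := hKccover x
    obtain ⟨P, hP, N₀, hPstab⟩ := hloc x
    set k := max N₀ (m+1) with hk_def
    obtain ⟨-, -, -, Ω, hΩo, hΩsub, hΩsm⟩ := (seq k).2
    have hxΩ : x ∈ Ω := by
      apply hΩsub
      refine Or.inr (mem_iUnion₂.mpr ⟨m, Finset.mem_range.mpr (by omega), hm⟩)
    have h1 : ContMDiffAt I I' (⊤ : ℕ∞) (seq k).1 x := (hΩsm x hxΩ).contMDiffAt (hΩo.mem_nhds hxΩ)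
    exact h1.congr_of_eventuallyEq
      (Filter.eventuallyEq_of_mem hP fun y hy => hPstab k (le_max_left _ _) y hy)
  · intro x hx
    exact (seq (Nx x)).2.2.1 (hAD hx)
  · intro x
    have hd := (seq (Nx x)).2.2.2.1 x
    apply hηU x
    refine hd.trans ?_
    have h1 := (pow_halves (Nx x)).1
    nlinarith [hηpos x]
end

section
/- Let G be a group and Z a subgroup of the center of G, and let Γ be a subgroup of G with Z ≤ Γ. Let α, α' : Γ → G be injective group homomorphisms such that α maps Z onto Z (that is, α(Z) = Z) and α(γ)⁻¹α'(γ) ∈ Z for every γ ∈ Γ. Then there exists a unique group homomorphism e : Γ → Z such that α'(γ) = α(γ)·α(e(γ)) for all γ ∈ Γ. -/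
/-- Let `G` be a group, `Z` a central subgroup, `Γ` a subgroup containing `Z`, and
`α, α' : Γ → G` injective homomorphisms with `α(Z) = Z` and `α(γ)⁻¹ * α'(γ) ∈ Z` for all
`γ ∈ Γ`. Then there is a unique homomorphism `e : Γ → Z` with
`α'(γ) = α(γ) * α(e(γ))` for all `γ`. -/
theorem stmt11 {G : Type*} [Group G] (Z Γ : Subgroup G)
    (hZc : Z ≤ Subgroup.center G) (hZΓ : Z ≤ Γ)
    (α α' : Γ →* G) (hα : Function.Injective α) (hα' : Function.Injective α')
    (hαZ : Subgroup.map α (Z.subgroupOf Γ) = Z)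
    (h : ∀ γ : Γ, (α γ)⁻¹ * α' γ ∈ Z) :
    ∃! e : Γ →* Z, ∀ γ : Γ, α' γ = α γ * α (Subgroup.inclusion hZΓ (e γ)) := by
  have H : ∀ γ : Γ, ∃ z : Z, α (Subgroup.inclusion hZΓ z) = (α γ)⁻¹ * α' γ := by
    intro γ
    have hd : (α γ)⁻¹ * α' γ ∈ Subgroup.map α (Z.subgroupOf Γ) := by
      rw [hαZ]; exact h γ
    obtain ⟨w, hw, hαw⟩ := hd
    exact ⟨⟨w.1, hw⟩, hαw⟩
  choose f hf using H
  have inj : Function.Injective fun z : Z => α (Subgroup.inclusion hZΓ z) :=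
    fun a b hab => Subgroup.inclusion_injective hZΓ (hα hab)
  have fmul : ∀ γ γ' : Γ, f (γ * γ') = f γ * f γ' := by
    intro γ γ'
    apply inj
    simp only [map_mul, hf]
    have comm := Subgroup.mem_center_iff.mp (hZc (h γ)) ((α γ')⁻¹)
    calc (α γ * α γ')⁻¹ * (α' γ * α' γ')
        = (α γ')⁻¹ * ((α γ)⁻¹ * α' γ) * α' γ' := by
          rw [mul_inv_rev]; group
      _ = ((α γ)⁻¹ * α' γ) * (α γ')⁻¹ * α' γ' := by rw [comm]
      _ = ((α γ)⁻¹ * α' γ) * ((α γ')⁻¹ * α' γ') := by rw [mul_assoc]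
  refine ⟨MonoidHom.mk' f fmul, ?_, ?_⟩
  · intro γ
    rw [show (MonoidHom.mk' f fmul) γ = f γ from rfl, hf]; group
  · intro e' he'
    ext γ
    have : e' γ = f γ := by
      apply inj
      simp only [hf]
      rw [he' γ]; group
    rw [this]; rfl
end

section
/- Let Γ be a group and Z a subgroup of the center of Γ such that the quotient group Γ/Z has trivial center. Suppose e : Γ → Z is a group homomorphism and δ ∈ Γ is such that γ·e(γ) = δγδ⁻¹ for all γ ∈ Γ. Then e is the trivial homomorphism. -/
/-- Let `Γ` be a group and `Z` a central subgroup such that `Γ/Z` has trivial center.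
If `e : Γ → Z` is a homomorphism and `δ ∈ Γ` satisfies `γ * e(γ) = δγδ⁻¹` for all `γ`,
then `e` is trivial. -/
theorem stmt12 {Γ : Type*} [Group Γ] (Z : Subgroup Γ) [Z.Normal]
    (hZ : Z ≤ Subgroup.center Γ)
    (hcenter : Subgroup.center (Γ ⧸ Z) = ⊥)
    (e : Γ →* Z) (δ : Γ)
    (h : ∀ γ : Γ, γ * (e γ : Γ) = δ * γ * δ⁻¹) :
    e = 1 := by
  have hδbar : (δ : Γ ⧸ Z) ∈ Subgroup.center (Γ ⧸ Z) := by
    rw [Subgroup.mem_center_iff]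
    intro g
    induction g using QuotientGroup.induction_on with
    | H γ =>
      have : ((γ * (e γ : Γ) : Γ) : Γ ⧸ Z) = ((γ : Γ) : Γ ⧸ Z) := by
        rw [QuotientGroup.mk_mul, (QuotientGroup.eq_one_iff _).mpr (e γ).2, mul_one]
      have h2 : ((δ * γ * δ⁻¹ : Γ) : Γ ⧸ Z) = ((γ : Γ) : Γ ⧸ Z) := by
        rw [← h γ]; exact this
      have := h2
      simp only [QuotientGroup.mk_mul, QuotientGroup.mk_inv] at this
      rw [mul_assoc] at this
      have h4 := congrArg (· * ((δ : Γ) : Γ ⧸ Z)) this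
      simp only [mul_assoc, inv_mul_cancel, mul_one] at h4
      exact h4.symm
  rw [hcenter, Subgroup.mem_bot, QuotientGroup.eq_one_iff] at hδbar
  have hδc : δ ∈ Subgroup.center Γ := hZ hδbar
  ext γ
  have := h γ
  rw [Subgroup.mem_center_iff] at hδc
  rw [← hδc γ, mul_assoc, mul_inv_cancel, mul_one] at this
  have h1 : (e γ : Γ) = 1 := by
    exact mul_left_cancel (a := γ) (this.trans (mul_one γ).symm)
  have : e γ = 1 := Subtype.ext h1
  simpa using this
end
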